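/- arXiv:0912.1503 — 8 statements merged into one kernel-verified Lean document; each statement's English description precedes it below -/
import Mathlib

section
/- If a Steiner structure S_2[2,k,n] exists, then a Steiner system S(3, 2^k, 2^n) exists: the collection of all translates β + P, for P a k-dimensional subspace in the structure and β ∈ F_2^n, forms a collection of 2^k-subsets of F_2^n such that every 3-element subset of F_2^n is contained in exactly one of them. -/
open Module

theorem steiner_structure_implies_steiner_system (n k : ℕ)
    (hk : 2 ≤ k) (hkn : k ≤ n)
    (S : Set (Submodule (ZMod 2) (Fin n → ZMod 2)))
    (hdim : ∀ P ∈ S, finrank (ZMod 2) P = k)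
    (hsteiner : ∀ R : Submodule (ZMod 2) (Fin n → ZMod 2),
      finrank (ZMod 2) R = 2 → ∃! P, P ∈ S ∧ R ≤ P) :
    ∃ 𝓑 : Set (Set (Fin n → ZMod 2)),
      𝓑 = {B | ∃ P ∈ S, ∃ β : Fin n → ZMod 2, B = (β + ·) '' (P : Set (Fin n → ZMod 2))} ∧
      (∀ B ∈ 𝓑, Nat.card B = 2 ^ k) ∧
      (∀ x y z : Fin n → ZMod 2, x ≠ y → x ≠ z → y ≠ z →
        ∃! B, B ∈ 𝓑 ∧ ({x, y, z} : Set (Fin n → ZMod 2)) ⊆ B) := by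
  classical
  have addself : ∀ v : Fin n → ZMod 2, v + v = 0 := by
    intro v; funext i; exact CharTwo.add_self_eq_zero _
  refine ⟨_, rfl, ?_, ?_⟩
  · -- cardinality of blocks
    rintro B ⟨P, hP, β, rfl⟩
    have hinj : Function.Injective (β + ·) := fun a b h => by
      simpa using congrArg (fun w => -β + w) h
    rw [Nat.card_image_of_injective hinj]
    haveI : Fintype P := Fintype.ofFinite P
    have hcard : Nat.card P = 2 ^ k := by
      rw [Nat.card_eq_fintype_card, card_eq_pow_finrank (K := ZMod 2) (V := P), ZMod.card,
        hdim P hP]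
    exact hcard
  · intro x y z hxy hxz hyz
    set u := x + y with hu
    set v := x + z with hv
    have hu0 : u ≠ 0 := fun h => hxy (by
      have := congrArg (fun w => x + w) h
      simpa [hu, ← add_assoc, addself x] using this.symm)
    have hv0 : v ≠ 0 := fun h => hxz (by
      have := congrArg (fun w => x + w) h
      simpa [hv, ← add_assoc, addself x] using this.symm)
    have huv : u ≠ v := fun h => hyz (by
      have := congrArg (fun w => x + w) h
      simpa [hu, hv, ← add_assoc, addself x] using this)
    have hzmod : ∀ a : ZMod 2, a = 0 ∨ a = 1 := by decide
    have hind : LinearIndependent (ZMod 2) ![u, v] := by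
      rw [LinearIndependent.pair_iff]
      intro s t hst
      rcases hzmod s with rfl | rfl <;> rcases hzmod t with rfl | rfl
      · exact ⟨rfl, rfl⟩
      · simp only [zero_smul, one_smul, zero_add] at hst; exact absurd hst hv0
      · simp only [one_smul, zero_smul, add_zero] at hst; exact absurd hst hu0
      · exfalso
        simp only [one_smul] at hst
        apply huv
        have := congrArg (fun w => w + v) hst
        simpa [add_assoc, addself v] using this
    have hrange : Set.range ![u, v] = ({u, v} : Set (Fin n → ZMod 2)) := by
      ext w; simp [Matrix.range_cons, Matrix.range_empty, or_comm]
    have hR : finrank (ZMod 2) (Submodule.span (ZMod 2) ({u, v} : Set (Fin n → ZMod 2))) = 2 := by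
      rw [← hrange, finrank_span_eq_card hind]; simp
    obtain ⟨P, ⟨hPS, hRP⟩, hPuniq⟩ := hsteiner _ hR
    have huP : u ∈ P := hRP (Submodule.subset_span (by simp))
    have hvP : v ∈ P := hRP (Submodule.subset_span (by simp))
    refine ⟨(x + ·) '' (P : Set (Fin n → ZMod 2)), ⟨⟨P, hPS, x, rfl⟩, ?_⟩, ?_⟩
    · intro w hw
      rcases hw with rfl | rfl | rfl
      · exact ⟨0, P.zero_mem, by simp⟩
      · exact ⟨u, huP, by simp [hu, ← add_assoc, addself x]⟩
      · exact ⟨v, hvP, by simp [hv, ← add_assoc, addself x]⟩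
    · rintro B ⟨⟨Q, hQS, β, rfl⟩, hsub⟩
      -- x, y, z ∈ β + Q
      obtain ⟨a, haQ, ha⟩ := hsub (by simp : x ∈ ({x, y, z} : Set _))
      obtain ⟨b, hbQ, hb⟩ := hsub (by simp : y ∈ ({x, y, z} : Set _))
      obtain ⟨c, hcQ, hc⟩ := hsub (by simp : z ∈ ({x, y, z} : Set _))
      simp only at ha hb hc
      have huQ : u ∈ Q := by
        have h1 : u = a + b := by
          rw [hu, ← ha, ← hb, add_add_add_comm, addself β, zero_add]
        rw [h1]; exact Q.add_mem haQ hbQ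
      have hvQ : v ∈ Q := by
        have h1 : v = a + c := by
          rw [hv, ← ha, ← hc, add_add_add_comm, addself β, zero_add]
        rw [h1]; exact Q.add_mem haQ hcQ
      have hQP : Q = P := hPuniq Q ⟨hQS, Submodule.span_le.mpr (by
        rintro w (rfl | rfl) <;> assumption)⟩
      subst hQP
      -- β + Q = x + Q as sets
      ext w
      constructor
      · rintro ⟨q, hq, rfl⟩
        refine ⟨a + q, Q.add_mem haQ hq, ?_⟩
        simp only
        rw [← ha, add_assoc, ← add_assoc a a q, addself a, zero_add]
      · rintro ⟨q, hq, rfl⟩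
        refine ⟨a + q, Q.add_mem haQ hq, ?_⟩
        simp only
        rw [← ha, ← add_assoc]
end

section
/- For all 1 ≤ k ≤ n, C_q(n, k, 1) = ⌈(q^n − 1)/(q^k − 1)⌉. -/
open Module

/-- Minimum size of a q-covering design C_q[n,k,r] over the field F. -/
noncomputable def covNum (F : Type) [Field F] [Fintype F] (n k r : ℕ) : ℕ :=
  sInf {m | ∃ S : Finset (Submodule F (Fin n → F)), S.card = m ∧
    (∀ W ∈ S, finrank F W = k) ∧
    ∀ R : Submodule F (Fin n → F), finrank F R = r → ∃ W ∈ S, R ≤ W}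

/-- Minimum size of a q-Turán design T_q[n,k,r] over the field F. -/
noncomputable def turNum (F : Type) [Field F] [Fintype F] (n k r : ℕ) : ℕ :=
  sInf {m | ∃ S : Finset (Submodule F (Fin n → F)), S.card = m ∧
    (∀ W ∈ S, finrank F W = r) ∧
    ∀ K : Submodule F (Fin n → F), finrank F K = k → ∃ W ∈ S, W ≤ K}

/-- Gaussian binomial coefficient [m choose r]_q, as the number of r-dimensional
subspaces of an m-dimensional space over F (with |F| = q). -/
noncomputable def gaussBinom (F : Type) [Field F] [Fintype F] (m r : ℕ) : ℕ :=
  Nat.card {W : Submodule F (Fin m → F) // finrank F W = r}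

open Polynomial in
lemma exists_finext (F : Type) [Field F] [Fintype F] (m : ℕ) (hm : m ≠ 0) :
    ∃ (K : Type) (_ : Field K) (_ : Algebra F K) (_ : FiniteDimensional F K),
      finrank F K = m := by
  classical
  obtain ⟨p, hchar⟩ := CharP.exists F
  haveI := hchar
  haveI hp : Fact p.Prime := ⟨CharP.char_is_prime F p⟩
  obtain ⟨e, hpe, hqe⟩ := FiniteField.card F p
  set q := Fintype.card F with hqdef
  have hq2 : 1 < q := Fintype.one_lt_card
  set g : F[X] := X ^ q ^ m - X with hg
  refine ⟨SplittingField g, inferInstance, inferInstance, inferInstance, ?_⟩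
  set K := SplittingField g
  haveI : CharP K p := (Algebra.charP_iff F K p).mp hchar
  haveI : Finite K := Module.finite_of_finite F
  haveI : Fintype K := Fintype.ofFinite K
  have hpq : p ∣ q ^ m := dvd_trans (hqe ▸ dvd_pow_self p e.pos.ne') (dvd_pow_self q hm)
  have hqm : q ^ m = p ^ (e * m) := by rw [hqe, ← pow_mul]
  have sep : (g : F[X]).Separable := galois_poly_separable p (q ^ m) hpq
  have aux : g ≠ 0 := FiniteField.X_pow_card_pow_sub_X_ne_zero _ hm hq2
  have key : Fintype.card (g.rootSet K) = g.natDegree :=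
    card_rootSet_eq_natDegree sep (SplittingField.splits g)
  have nat_degree_eq : g.natDegree = q ^ m :=
    FiniteField.X_pow_card_pow_sub_X_natDegree_eq _ hm hq2
  rw [nat_degree_eq] at key
  suffices huniv : g.rootSet K = Set.univ by
    simp_rw [huniv, ← Fintype.ofEquiv_card (Equiv.Set.univ _)] at key
    rw [@card_eq_pow_finrank F _ _ _ _ _ (_)] at key
    exact Nat.pow_right_injective hq2 key
  rw [Set.eq_univ_iff_forall]
  suffices h2 : ∀ (x) (_ : x ∈ (⊤ : Subalgebra F K)), x ∈ g.rootSet K by simpa using h2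
  rw [← SplittingField.adjoin_rootSet]
  simp_rw [Algebra.mem_adjoin_iff]
  intro x hx
  refine Subring.closure_induction ?_ ?_ ?_ ?_ ?_ ?_ hx <;> simp_rw [mem_rootSet_of_ne aux]
  · rintro x (⟨r, rfl⟩ | hx)
    · simp only [g, map_sub, map_pow, aeval_X]
      rw [← map_pow, FiniteField.pow_card_pow, sub_self]
    · rwa [mem_rootSet_of_ne aux] at hx
  · rw [← coeff_zero_eq_aeval_zero']
    simp only [g, coeff_X_pow, coeff_X_zero, sub_zero, _root_.map_eq_zero, ite_eq_right_iff,
      one_ne_zero, coeff_sub]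
    intro hn
    exact Nat.not_lt_zero 1 (eq_zero_of_pow_eq_zero hn.symm ▸ hq2)
  · simp [g]
  · simp only [g, aeval_X_pow, aeval_X, map_sub, sub_eq_zero]
    intro x y _ _ hx hy
    have h := add_pow_char_pow x y (p := p) (n := (e : ℕ) * m) (R := K)
    rw [← hqm] at h
    rw [h, hx, hy]
  · intro x _ hx
    simp only [g, sub_eq_zero, aeval_X_pow, aeval_X, map_sub, sub_neg_eq_add] at hx ⊢
    have h1 : ((-1 : K)) ^ q ^ m = -1 := by
      have h2 := neg_one_pow_char_pow K (p := p) (n := (e : ℕ) * m)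
      rwa [← hqm] at h2
    rw [neg_pow, hx, h1]
    ring
  · simp only [g, aeval_X_pow, aeval_X, map_sub, mul_pow, sub_eq_zero]
    intro x y _ _ hx hy
    rw [hx, hy]

section helpers
variable {F : Type} [Field F]

lemma cover_transport {V W : Type} [AddCommGroup V] [Module F V]
    [AddCommGroup W] [Module F W] (e : V ≃ₗ[F] W) {k c : ℕ}
    (h : ∃ S : Finset (Submodule F V), S.card ≤ c ∧ (∀ P ∈ S, finrank F P = k) ∧
      ∀ v : V, ∃ P ∈ S, v ∈ P) :
    ∃ S : Finset (Submodule F W), S.card ≤ c ∧ (∀ P ∈ S, finrank F P = k) ∧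
      ∀ w : W, ∃ P ∈ S, w ∈ P := by
  classical
  obtain ⟨S, h1, h2, h3⟩ := h
  refine ⟨S.image (Submodule.map (e : V →ₗ[F] W)), le_trans Finset.card_image_le h1, ?_, ?_⟩
  · intro P hP
    simp only [Finset.mem_image] at hP
    obtain ⟨Q, hQ, rfl⟩ := hP
    rw [LinearEquiv.finrank_map_eq]
    exact h2 Q hQ
  · intro w
    obtain ⟨P, hP, hw⟩ := h3 (e.symm w)
    exact ⟨P.map (e : V →ₗ[F] W), Finset.mem_image_of_mem _ hP,
      ⟨e.symm w, hw, e.apply_symm_apply w⟩⟩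

end helpers

lemma exists_cover (F : Type) [Field F] [Fintype F] (k : ℕ) (hk : 1 ≤ k) :
    ∀ n, k ≤ n → ∃ S : Finset (Submodule F (Fin n → F)),
      S.card * (Fintype.card F ^ k - 1) < Fintype.card F ^ n - 1 + (Fintype.card F ^ k - 1) ∧
      (∀ W ∈ S, finrank F W = k) ∧ ∀ v : Fin n → F, ∃ W ∈ S, v ∈ W := by
  classical
  intro n
  induction n using Nat.strong_induction_on with
  | _ n IH =>
  intro hkn
  set q := Fintype.card F with hq
  have hq2 : 1 < q := Fintype.one_lt_card
  have hbk : 2 ≤ q ^ k := Nat.one_lt_pow (by omega) hq2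
  rcases eq_or_lt_of_le hkn with rfl | hlt
  · -- n = k
    refine ⟨{⊤}, ?_, ?_, ?_⟩
    · simp only [Finset.card_singleton, one_mul]
      omega
    · intro W hW
      simp only [Finset.mem_singleton] at hW
      subst hW
      rw [finrank_top, Module.finrank_fin_fun]
    · intro v
      exact ⟨⊤, Finset.mem_singleton_self _, Submodule.mem_top⟩
  · -- k < n
    set m := n - k with hm
    have hm1 : 1 ≤ m := by omega
    have ham : 2 ≤ q ^ m := Nat.one_lt_pow (by omega) hq2
    obtain ⟨K, hF1, hF2, hF3, hK⟩ := exists_finext F m (by omega)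
    letI := hF1; letI := hF2; letI := hF3
    haveI : Finite K := Module.finite_of_finite F
    haveI : Fintype K := Fintype.ofFinite K
    have hcardK : Fintype.card K = q ^ m := by
      rw [card_eq_pow_finrank (K := F) (V := K), hK]
    have hmulab : q ^ m * q ^ k = q ^ n := by rw [← pow_add]; congr 1; omega
    rcases lt_or_ge n (2 * k) with h2k | h2k
    · -- middle case : k < n < 2*k, m < k
      have hmk : m < k := by omega
      -- model space
      set D := K × (Fin (k - m) → F) with hD
      haveI : Module.Finite F D := by infer_instance
      have hfD : finrank F D = k := by
        rw [Module.finrank_prod, hK, Module.finrank_fin_fun]; omega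
      have hfMo : finrank F (D × K) = n := by
        rw [Module.finrank_prod, hfD, hK]; omega
      have e : (D × K) ≃ₗ[F] (Fin n → F) :=
        Classical.choice (FiniteDimensional.nonempty_linearEquiv_of_finrank_eq
          (by rw [hfMo, Module.finrank_fin_fun]))
      -- subspaces
      have main : ∃ S : Finset (Submodule F (D × K)), S.card ≤ q ^ m + 1 ∧
          (∀ P ∈ S, finrank F P = k) ∧ ∀ v : D × K, ∃ P ∈ S, v ∈ P := by
        set ψ : K → (D →ₗ[F] D × K) := fun c => LinearMap.prod LinearMap.id
          ((LinearMap.mulLeft F c).comp (LinearMap.fst F K (Fin (k - m) → F))) with hψ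
        have hψinj : ∀ c, Function.Injective (ψ c) := by
          intro c a b hab
          exact congrArg Prod.fst hab
        set ψi : ((Fin (k - m) → F) × K) →ₗ[F] D × K := LinearMap.prod
          ((LinearMap.inr F K (Fin (k - m) → F)).comp (LinearMap.fst F (Fin (k - m) → F) K))
          (LinearMap.snd F (Fin (k - m) → F) K) with hψi
        have hψiinj : Function.Injective ψi := by
          intro a b hab
          have h1 := congrArg (fun z : D × K => z.1.2) hab
          have h2 := congrArg (fun z : D × K => z.2) hab
          exact Prod.ext h1 h2
        refine ⟨(Finset.univ.image fun c => LinearMap.range (ψ c)) ∪ {LinearMap.range ψi},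
          ?_, ?_, ?_⟩
        · refine le_trans (Finset.card_union_le _ _) ?_
          simp only [Finset.card_singleton]
          exact Nat.add_le_add (le_trans Finset.card_image_le (by simp [hcardK])) le_rfl
        · intro P hP
          simp only [Finset.mem_union, Finset.mem_image, Finset.mem_singleton] at hP
          rcases hP with ⟨c, -, rfl⟩ | rfl
          · rw [LinearMap.finrank_range_of_inj (hψinj c), hfD]
          · rw [LinearMap.finrank_range_of_inj hψiinj, Module.finrank_prod,
              Module.finrank_fin_fun, hK]
            omega
        · rintro ⟨⟨t, s⟩, y⟩
          by_cases ht : t = 0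
          · refine ⟨LinearMap.range ψi, by simp, ⟨(s, y), ?_⟩⟩
            simp [ψi, ht]
          · refine ⟨LinearMap.range (ψ (y * t⁻¹)), by simp [Finset.mem_union], ⟨(t, s), ?_⟩⟩
            simp only [ψ, LinearMap.prod_apply, Function.prod_apply, LinearMap.id_coe, id_eq,
              LinearMap.coe_comp, Function.comp_apply, LinearMap.mulLeft_apply]
            rw [show (LinearMap.fst F K (Fin (k - m) → F)) (t, s) = t from rfl,
              mul_assoc, inv_mul_cancel₀ ht, mul_one]
        -- done
      obtain ⟨S, hc1, hc2, hc3⟩ := cover_transport e main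
      refine ⟨S, ?_, hc2, hc3⟩
      have h1 : S.card * (q ^ k - 1) ≤ (q ^ m + 1) * (q ^ k - 1) :=
        Nat.mul_le_mul_right _ hc1
      have h2 : (q ^ m + 1) * (q ^ k - 1) + (q ^ m + 1) = (q ^ m + 1) * q ^ k := by
        rw [← Nat.mul_succ]; congr 1; omega
      have h3 : (q ^ m + 1) * q ^ k = q ^ n + q ^ k := by rw [Nat.add_mul, one_mul, hmulab]
      omega
    · -- step case : n ≥ 2 * k
      have hkm : k ≤ m := by omega
      have em : (Fin m → F) ≃ₗ[F] K :=
        Classical.choice (FiniteDimensional.nonempty_linearEquiv_of_finrank_eq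
          (by rw [Module.finrank_fin_fun, hK]))
      set j : (Fin k → F) →ₗ[F] (Fin m → F) :=
        LinearMap.pi (fun i : Fin m => if h : (i : ℕ) < k then LinearMap.proj (⟨i, h⟩ : Fin k)
          else 0) with hj
      have hjval : ∀ (x : Fin k → F) (i : Fin k), j x ⟨i.1, lt_of_lt_of_le i.2 hkm⟩ = x i := by
        intro x i
        simp only [j, LinearMap.pi_apply]
        rw [dif_pos i.2]
        simp [LinearMap.proj]
      have hjinj : Function.Injective j := by
        intro a b hab
        funext i
        have h := congrFun hab (⟨i.1, lt_of_lt_of_le i.2 hkm⟩ : Fin m)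
        rw [hjval a i, hjval b i] at h
        exact h
      set ι : (Fin k → F) →ₗ[F] K := em.toLinearMap.comp j with hι
      have hιinj : Function.Injective ι := by
        intro a b hab
        exact hjinj (em.injective hab)
      have hfMo : finrank F ((Fin k → F) × K) = n := by
        rw [Module.finrank_prod, Module.finrank_fin_fun, hK]; omega
      have e : ((Fin k → F) × K) ≃ₗ[F] (Fin n → F) :=
        Classical.choice (FiniteDimensional.nonempty_linearEquiv_of_finrank_eq
          (by rw [hfMo, Module.finrank_fin_fun]))
      obtain ⟨S', hS'1, hS'2, hS'3⟩ := IH m (by omega) hkm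
      set jr : (Fin m → F) →ₗ[F] ((Fin k → F) × K) :=
        (LinearMap.inr F (Fin k → F) K).comp em.toLinearMap with hjr
      have hjrinj : Function.Injective jr := by
        intro a b hab
        apply em.injective
        have := congrArg Prod.snd hab
        simpa [jr] using this
      set φ : K → ((Fin k → F) →ₗ[F] ((Fin k → F) × K)) := fun a =>
        LinearMap.prod LinearMap.id ((LinearMap.mulLeft F a).comp ι) with hφ
      have hφinj : ∀ a, Function.Injective (φ a) := by
        intro a x y hxy
        exact congrArg Prod.fst hxy
      have main : ∃ S : Finset (Submodule F ((Fin k → F) × K)),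
          S.card ≤ q ^ m + S'.card ∧
          (∀ P ∈ S, finrank F P = k) ∧ ∀ v : (Fin k → F) × K, ∃ P ∈ S, v ∈ P := by
        refine ⟨(Finset.univ.image fun a => LinearMap.range (φ a)) ∪
          S'.image (Submodule.map jr), ?_, ?_, ?_⟩
        · refine le_trans (Finset.card_union_le _ _) ?_
          exact Nat.add_le_add (le_trans Finset.card_image_le (by simp [hcardK]))
            Finset.card_image_le
        · intro P hP
          simp only [Finset.mem_union, Finset.mem_image] at hP
          rcases hP with ⟨a, -, rfl⟩ | ⟨W', hW', rfl⟩
          · rw [LinearMap.finrank_range_of_inj (hφinj a), Module.finrank_fin_fun]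
          · rw [← (Submodule.equivMapOfInjective jr hjrinj W').finrank_eq]
            exact hS'2 W' hW'
        · rintro ⟨x, y⟩
          by_cases hx : x = 0
          · obtain ⟨W', hW', hv⟩ := hS'3 (em.symm y)
            refine ⟨Submodule.map jr W', ?_, ⟨em.symm y, hv, ?_⟩⟩
            · simp only [Finset.mem_union, Finset.mem_image]
              exact Or.inr ⟨W', hW', rfl⟩
            · simp [jr, hx]
          · have hιx : ι x ≠ 0 := fun h => hx (hιinj (by simpa using h))
            refine ⟨LinearMap.range (φ (y * (ι x)⁻¹)), ?_, ⟨x, ?_⟩⟩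
            · simp only [Finset.mem_union, Finset.mem_image]
              exact Or.inl ⟨y * (ι x)⁻¹, Finset.mem_univ _, rfl⟩
            · simp only [φ, LinearMap.prod_apply, Function.prod_apply, LinearMap.id_coe, id_eq,
                LinearMap.coe_comp, Function.comp_apply, LinearMap.mulLeft_apply]
              rw [mul_assoc, inv_mul_cancel₀ hιx, mul_one]
      obtain ⟨S, hc1, hc2, hc3⟩ := cover_transport e main
      refine ⟨S, ?_, hc2, hc3⟩
      have h1 : S.card * (q ^ k - 1) ≤ (q ^ m + S'.card) * (q ^ k - 1) :=
        Nat.mul_le_mul_right _ hc1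
      have h2 : (q ^ m + S'.card) * (q ^ k - 1) =
          q ^ m * (q ^ k - 1) + S'.card * (q ^ k - 1) := Nat.add_mul _ _ _
      have h3 : q ^ m * (q ^ k - 1) + q ^ m = q ^ m * q ^ k := by
        rw [← Nat.mul_succ]; congr 1; omega
      omega

lemma cover_lower (F : Type) [Field F] [Fintype F] {n k : ℕ}
    (S : Finset (Submodule F (Fin n → F))) (hd : ∀ W ∈ S, finrank F W = k)
    (hc : ∀ v : Fin n → F, v ≠ 0 → ∃ W ∈ S, v ∈ W) :
    Fintype.card F ^ n - 1 ≤ S.card * (Fintype.card F ^ k - 1) := by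
  classical
  set q := Fintype.card F with hq
  have hcount : ∀ W ∈ S,
      (Finset.univ.filter fun v : Fin n → F => v ∈ W ∧ v ≠ 0).card = q ^ k - 1 := by
    intro W hW
    have h1 : (Finset.univ.filter fun v : Fin n → F => v ∈ W).card = q ^ k := by
      rw [← Fintype.card_subtype, card_eq_pow_finrank (K := F) (V := {v // v ∈ W})]
      rw [show finrank F {v // v ∈ W} = finrank F W from rfl, hd W hW]
    have h2 : (Finset.univ.filter fun v : Fin n → F => v ∈ W ∧ v ≠ 0) =
        (Finset.univ.filter fun v : Fin n → F => v ∈ W).erase 0 := by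
      ext v
      simp only [Finset.mem_filter, Finset.mem_univ, true_and, Finset.mem_erase]
      tauto
    rw [h2, Finset.card_erase_of_mem, h1]
    simp [W.zero_mem]
  have hsub : (Finset.univ.filter fun v : Fin n → F => v ≠ 0) ⊆
      S.biUnion fun W => Finset.univ.filter fun v : Fin n → F => v ∈ W ∧ v ≠ 0 := by
    intro v hv
    simp only [Finset.mem_filter, Finset.mem_univ, true_and] at hv
    obtain ⟨W, hW, hvW⟩ := hc v hv
    simp only [Finset.mem_biUnion, Finset.mem_filter, Finset.mem_univ, true_and]
    exact ⟨W, hW, hvW, hv⟩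
  have hT : (Finset.univ.filter fun v : Fin n → F => v ≠ 0).card = q ^ n - 1 := by
    rw [Finset.filter_ne', Finset.card_erase_of_mem (Finset.mem_univ _), Finset.card_univ]
    congr 1
    rw [Fintype.card_fun, Fintype.card_fin]
  calc q ^ n - 1 = (Finset.univ.filter fun v : Fin n → F => v ≠ 0).card := hT.symm
    _ ≤ (S.biUnion fun W => Finset.univ.filter fun v : Fin n → F => v ∈ W ∧ v ≠ 0).card :=
        Finset.card_le_card hsub
    _ ≤ ∑ W ∈ S, (Finset.univ.filter fun v : Fin n → F => v ∈ W ∧ v ≠ 0).card :=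
        Finset.card_biUnion_le
    _ = ∑ _W ∈ S, (q ^ k - 1) := Finset.sum_congr rfl hcount
    _ = S.card * (q ^ k - 1) := by rw [Finset.sum_const, smul_eq_mul]

theorem covNum_r_one (F : Type) [Field F] [Fintype F] (n k : ℕ)
    (hk1 : 1 ≤ k) (hkn : k ≤ n) :
    (covNum F n k 1 : ℤ) =
      ⌈(((Fintype.card F : ℚ)) ^ n - 1) / ((Fintype.card F : ℚ) ^ k - 1)⌉ := by
  classical
  set q := Fintype.card F with hq
  have hq2 : 1 < q := Fintype.one_lt_card
  have hbk : 2 ≤ q ^ k := Nat.one_lt_pow (by omega) hq2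
  have hbn : 2 ≤ q ^ n := Nat.one_lt_pow (by omega) hq2
  obtain ⟨S, hcard, hdim, hcov⟩ := exists_cover F k hk1 n hkn
  rw [← hq] at hcard
  set E := {m | ∃ S : Finset (Submodule F (Fin n → F)), S.card = m ∧
    (∀ W ∈ S, finrank F W = k) ∧
    ∀ R : Submodule F (Fin n → F), finrank F R = 1 → ∃ W ∈ S, R ≤ W} with hE
  have hmem : S.card ∈ E := by
    refine ⟨S, rfl, hdim, ?_⟩
    intro R hR
    obtain ⟨v, hvR, hv0⟩ : ∃ v ∈ R, v ≠ 0 := by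
      by_contra h
      push_neg at h
      have hbot : R = ⊥ := by
        rw [Submodule.eq_bot_iff]
        exact h
      rw [hbot, finrank_bot] at hR
      omega
    obtain ⟨W, hW, hvW⟩ := hcov v
    refine ⟨W, hW, ?_⟩
    have hspan : Submodule.span F {v} = R := by
      apply Submodule.eq_of_le_of_finrank_le
      · rw [Submodule.span_le, Set.singleton_subset_iff]; exact hvR
      · rw [hR, finrank_span_singleton hv0]
    rw [← hspan, Submodule.span_le, Set.singleton_subset_iff]
    exact hvW
  have hlow : ∀ b ∈ E, q ^ n - 1 ≤ b * (q ^ k - 1) := by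
    rintro b ⟨S₀, rfl, hd₀, hc₀⟩
    apply cover_lower F S₀ hd₀
    intro v hv
    obtain ⟨W, hW, hle⟩ := hc₀ (Submodule.span F {v}) (finrank_span_singleton hv)
    exact ⟨W, hW, hle (Submodule.mem_span_singleton_self v)⟩
  have hSA : q ^ n - 1 ≤ S.card * (q ^ k - 1) := hlow _ hmem
  have hInf : covNum F n k 1 = S.card := by
    rw [covNum]
    refine le_antisymm (Nat.sInf_le hmem) (le_csInf ⟨S.card, hmem⟩ ?_)
    intro b hb
    have h1 := hlow b hb
    have h2 : S.card * (q ^ k - 1) < (b + 1) * (q ^ k - 1) := by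
      have h3 : (b + 1) * (q ^ k - 1) = b * (q ^ k - 1) + (q ^ k - 1) := by ring
      omega
    exact Nat.lt_succ_iff.mp (Nat.lt_of_mul_lt_mul_right h2)
  rw [hInf]
  have hBc : ((q ^ k - 1 : ℕ) : ℚ) = (q : ℚ) ^ k - 1 := by
    rw [Nat.cast_sub (by omega)]; push_cast; ring
  have hAc : ((q ^ n - 1 : ℕ) : ℚ) = (q : ℚ) ^ n - 1 := by
    rw [Nat.cast_sub (by omega)]; push_cast; ring
  have hBpos : (0 : ℚ) < (q : ℚ) ^ k - 1 := by
    rw [← hBc]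
    exact_mod_cast Nat.sub_pos_of_lt (by omega)
  symm
  rw [Int.ceil_eq_iff]
  constructor
  · rw [lt_div_iff₀ hBpos]
    have hcast : ((S.card * (q ^ k - 1) : ℕ) : ℚ) < ((q ^ n - 1 + (q ^ k - 1) : ℕ) : ℚ) :=
      Nat.cast_lt.mpr hcard
    rw [Nat.cast_mul, hBc, Nat.cast_add, hAc, hBc] at hcast
    push_cast
    nlinarith [hcast]
  · rw [div_le_iff₀ hBpos]
    have hcast : ((q ^ n - 1 : ℕ) : ℚ) ≤ ((S.card * (q ^ k - 1) : ℕ) : ℚ) :=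
      Nat.cast_le.mpr hSA
    rw [Nat.cast_mul, hBc, hAc] at hcast
    push_cast
    exact hcast
end

section
/- For 1 ≤ k ≤ n, T_q(n, k, 1) = (q^{n−k+1} − 1)/(q − 1): the minimum number of 1-dimensional subspaces of F_q^n such that every k-dimensional subspace contains at least one of them equals the number of 1-dimensional subspaces of an (n−k+1)-dimensional space. -/
open Module

set_option linter.unusedSectionVars false
set_option linter.unusedVariables false

section Aux

variable {F : Type} [Field F] [Fintype F]

section Count

variable (V : Type) [AddCommGroup V] [Module F V] [Module.Finite F V]

/-- nonzero vectors are partitioned into lines -/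
noncomputable def linesEquiv :
    {v : V // v ≠ 0} ≃ Σ P : {P : Submodule F V // finrank F P = 1}, {x : P.1 // x ≠ 0} := by
  classical
  refine (Equiv.sigmaFiberEquiv (fun v : {v : V // v ≠ 0} =>
    (⟨F ∙ v.1, finrank_span_singleton v.2⟩ : {P : Submodule F V // finrank F P = 1}))).symm.trans
    (Equiv.sigmaCongrRight fun P => ?_)
  refine ⟨fun v => ⟨⟨v.1.1, ?_⟩, ?_⟩, fun x => ⟨⟨x.1.1, fun h => x.2 (by exact_mod_cast h)⟩,
    Subtype.ext ?_⟩, ?_, ?_⟩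
  · have h : (Submodule.span F {v.1.1} : Submodule F V) = P.1 := congrArg Subtype.val v.2
    rw [← h]
    exact Submodule.mem_span_singleton_self _
  · exact fun h => v.1.2 (by simpa using congrArg Subtype.val h)
  · have hx : x.1.1 ≠ 0 := fun h => x.2 (by exact_mod_cast h)
    refine Submodule.eq_of_le_of_finrank_eq ?_ ?_
    · rw [Submodule.span_singleton_le_iff_mem]; exact x.1.2
    · rw [finrank_span_singleton hx, P.2]
  · intro v; apply Subtype.ext; apply Subtype.ext; rfl
  · intro x; apply Subtype.ext; apply Subtype.ext; rfl

lemma card_lines_mul :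
    Nat.card {P : Submodule F V // finrank F P = 1} * (Fintype.card F - 1)
      = Fintype.card F ^ (finrank F V) - 1 := by
  classical
  haveI : Finite V := Module.finite_of_finite F
  haveI : Fintype V := Fintype.ofFinite V
  haveI : Finite (Submodule F V) :=
    Finite.of_injective (fun P => (P : Set V)) SetLike.coe_injective
  have hcv : ∀ (W : Type) [AddCommGroup W] [Module F W] [Finite W],
      Nat.card {x : W // x ≠ 0} = Nat.card W - 1 := by
    intro W _ _ _
    haveI : Fintype W := Fintype.ofFinite W
    classical
    rw [Nat.card_eq_fintype_card, Nat.card_eq_fintype_card]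
    have h := Fintype.card_subtype_compl (fun x : W => x = 0)
    rw [Fintype.card_subtype_eq (0 : W)] at h
    exact h
  have h2 : ∀ P : {P : Submodule F V // finrank F P = 1},
      Nat.card {x : P.1 // x ≠ 0} = Fintype.card F - 1 := by
    intro P
    haveI : Fintype P.1 := Fintype.ofFinite P.1
    rw [hcv P.1, Nat.card_eq_fintype_card, card_eq_pow_finrank (K := F), P.2, pow_one]
  haveI : Fintype {P : Submodule F V // finrank F P = 1} := Fintype.ofFinite _
  haveI instF : ∀ P : {P : Submodule F V // finrank F P = 1}, Fintype {x : P.1 // x ≠ 0} :=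
    fun P => Fintype.ofFinite _
  have h1 : Nat.card {v : V // v ≠ 0} = Fintype.card F ^ (finrank F V) - 1 := by
    rw [hcv V, Nat.card_eq_fintype_card, card_eq_pow_finrank (K := F)]
  calc Nat.card {P : Submodule F V // finrank F P = 1} * (Fintype.card F - 1)
      = ∑ P : {P : Submodule F V // finrank F P = 1}, (Fintype.card F - 1) := by
        rw [Finset.sum_const, smul_eq_mul, Nat.card_eq_fintype_card]
        rfl
    _ = ∑ P : {P : Submodule F V // finrank F P = 1},
          Fintype.card {x : P.1 // x ≠ 0} := by
        refine Finset.sum_congr rfl fun P _ => ?_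
        rw [← h2 P, Nat.card_eq_fintype_card]
    _ = Fintype.card (Σ P : {P : Submodule F V // finrank F P = 1}, {x : P.1 // x ≠ 0}) := by
        rw [Fintype.card_sigma]
    _ = Nat.card {v : V // v ≠ 0} := by
        rw [← Nat.card_eq_fintype_card]
        exact (Nat.card_congr (linesEquiv V)).symm
    _ = Fintype.card F ^ (finrank F V) - 1 := h1

lemma card_lines :
    Nat.card {P : Submodule F V // finrank F P = 1}
      = (Fintype.card F ^ (finrank F V) - 1) / (Fintype.card F - 1) := by
  have hq : 0 < Fintype.card F - 1 := by
    have := Fintype.one_lt_card (α := F)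
    omega
  exact (Nat.div_eq_of_eq_mul_left hq (card_lines_mul V).symm).symm

end Count

section Main

variable {V : Type} [AddCommGroup V] [Module F V] [Module.Finite F V]

lemma finrank_sup_line (W P : Submodule F V) (hP : finrank F P = 1) (hle : ¬ P ≤ W) :
    finrank F ((W ⊔ P : Submodule F V)) = finrank F W + 1 := by
  have h := Submodule.finrank_sup_add_finrank_inf_eq W P
  have hlt : W ⊓ P < P :=
    lt_of_le_of_ne inf_le_right (fun he => hle (by rw [← he]; exact inf_le_left))
  have h2 := Submodule.finrank_lt_finrank_of_lt hlt
  omega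

/-- lines inside a fixed subspace U -/
lemma card_lines_le_sub (U : Submodule F V) :
    Nat.card {P : Submodule F V // finrank F P = 1 ∧ P ≤ U}
      = (Fintype.card F ^ (finrank F U) - 1) / (Fintype.card F - 1) := by
  rw [← card_lines (↥U)]
  refine Nat.card_congr (Equiv.symm ⟨fun p => ⟨p.1.map U.subtype,
    by rw [Submodule.finrank_map_subtype_eq]; exact p.2, Submodule.map_subtype_le U p.1⟩,
    fun P => ⟨P.1.comap U.subtype, ?_⟩, fun p => ?_, fun P => ?_⟩)
  · have hmap : (P.1.comap U.subtype).map U.subtype = P.1 := by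
      rw [Submodule.map_comap_subtype, inf_eq_right.mpr P.2.2]
    rw [← Submodule.finrank_map_subtype_eq U (P.1.comap U.subtype), hmap]
    exact P.2.1
  · apply Subtype.ext
    exact Submodule.comap_map_eq_of_injective (Submodule.injective_subtype U) p.1
  · apply Subtype.ext
    simp only
    rw [Submodule.map_comap_subtype, inf_eq_right.mpr P.2.2]

lemma finrank_comap_mkQ (W : Submodule F V) (Q : Submodule F (V ⧸ W)) :
    finrank F (Q.comap W.mkQ) = finrank F Q + finrank F W := by
  set X := Q.comap W.mkQ with hX
  have hWX : W ≤ X := by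
    intro w hw
    simp only [hX, Submodule.mem_comap, Submodule.mkQ_apply]
    rw [Submodule.Quotient.mk_eq_zero W |>.mpr hw]
    exact Q.zero_mem
  have key := LinearMap.finrank_range_add_finrank_ker (W.mkQ.comp X.subtype)
  have hrange : LinearMap.range (W.mkQ.comp X.subtype) = Q := by
    rw [LinearMap.range_comp, Submodule.range_subtype, hX,
      Submodule.map_comap_eq, Submodule.range_mkQ, top_inf_eq]
  have hker : finrank F (LinearMap.ker (W.mkQ.comp X.subtype)) = finrank F W := by
    rw [LinearMap.ker_comp, Submodule.ker_mkQ,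
      ← Submodule.finrank_map_subtype_eq X (W.comap X.subtype),
      Submodule.map_comap_subtype, inf_eq_right.mpr hWX]
  rw [hrange, hker] at key
  exact key.symm

/-- number of (j+1)-dim subspaces containing a fixed j-dim subspace W -/
lemma card_ext (W : Submodule F V) :
    Nat.card {X : Submodule F V // finrank F X = finrank F W + 1 ∧ W ≤ X}
      = (Fintype.card F ^ (finrank F V - finrank F W) - 1) / (Fintype.card F - 1) := by
  let e := Submodule.comapMkQRelIso W
  have hq : finrank F (V ⧸ W) = finrank F V - finrank F W := by
    have := Submodule.finrank_quotient_add_finrank W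
    omega
  rw [← hq, ← card_lines (V ⧸ W)]
  refine Nat.card_congr (Equiv.symm ⟨fun Q => ⟨(e Q.1).1, ?_, (e Q.1).2⟩,
    fun X => ⟨e.symm ⟨X.1, X.2.2⟩, ?_⟩, fun Q => ?_, fun X => ?_⟩)
  · have h0 : (e Q.1).1 = Q.1.comap W.mkQ := rfl
    rw [h0, finrank_comap_mkQ, Q.2, Nat.add_comm]
  · have h2 : (e (e.symm ⟨X.1, X.2.2⟩)).1
        = Submodule.comap W.mkQ (e.symm ⟨X.1, X.2.2⟩ : Submodule F (V ⧸ W)) := rfl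
    have h1 : (e (e.symm ⟨X.1, X.2.2⟩)).1 = X.1 := congrArg Subtype.val (e.apply_symm_apply _)
    have h3 := finrank_comap_mkQ W (e.symm ⟨X.1, X.2.2⟩ : Submodule F (V ⧸ W))
    rw [← h2, h1] at h3
    have := X.2.1
    omega
  · apply Subtype.ext
    simp only
    rw [show (⟨(e Q.1).1, (e Q.1).2⟩ : ↥(Set.Ici W)) = e Q.1 from Subtype.ext rfl,
      e.symm_apply_apply]
  · apply Subtype.ext
    show (e (e.symm ⟨X.1, X.2.2⟩)).1 = X.1
    exact congrArg Subtype.val (e.apply_symm_apply _)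

end Main

section Bounds

variable {V : Type} [AddCommGroup V] [Module F V] [Module.Finite F V]

lemma exists_subspace_dim (j : ℕ) (hj : j ≤ finrank F V) :
    ∃ U : Submodule F V, finrank F U = j := by
  induction j with
  | zero => exact ⟨⊥, by simp⟩
  | succ j ih =>
    obtain ⟨U, hU⟩ := ih (by omega)
    obtain ⟨m, hm⟩ := Submodule.exists_of_finrank_lt U (by omega)
    have hm1 : m ∉ U := by simpa using hm 1 one_ne_zero
    have hm0 : m ≠ 0 := fun h => hm1 (by rw [h]; exact U.zero_mem)
    refine ⟨U ⊔ Submodule.span F {m}, ?_⟩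
    rw [finrank_sup_line U _ (finrank_span_singleton hm0)
        (fun hle => hm1 (hle (Submodule.mem_span_singleton_self m))), hU]

lemma lower_bound (k : ℕ) (hk1 : 1 ≤ k) (hkn : k ≤ finrank F V)
    (S : Finset (Submodule F V)) (h1 : ∀ W ∈ S, finrank F W = 1)
    (hcov : ∀ K : Submodule F V, finrank F K = k → ∃ W ∈ S, W ≤ K) :
    (Fintype.card F ^ (finrank F V - k + 1) - 1) / (Fintype.card F - 1) ≤ S.card := by
  classical
  by_contra hlt
  push_neg at hlt
  haveI : Finite V := Module.finite_of_finite F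
  haveI : Fintype V := Fintype.ofFinite V
  haveI : Finite (Submodule F V) :=
    Finite.of_injective (fun P => (P : Set V)) SetLike.coe_injective
  haveI : Fintype (Submodule F V) := Fintype.ofFinite _
  have hq1 : 1 ≤ Fintype.card F := Fintype.card_pos
  have claim : ∀ j, j ≤ k → ∃ W : Submodule F V, finrank F W = j ∧ ∀ P ∈ S, ¬ P ≤ W := by
    intro j
    induction j with
    | zero =>
      intro _
      refine ⟨⊥, by simp, fun P hP hle => ?_⟩
      have h := h1 P hP
      rw [le_bot_iff] at hle
      rw [hle] at h
      simp at h
    | succ j ih =>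
      intro hjk
      obtain ⟨W, hWrank, hWavoid⟩ := ih (by omega)
      set T : Finset (Submodule F V) :=
        Finset.univ.filter (fun X => finrank F X = finrank F W + 1 ∧ W ≤ X) with hT
      have hTcard : T.card
          = (Fintype.card F ^ (finrank F V - j) - 1) / (Fintype.card F - 1) := by
        rw [hT, ← Fintype.card_subtype, ← Nat.card_eq_fintype_card, card_ext W, hWrank]
      have hTbig : (Fintype.card F ^ (finrank F V - k + 1) - 1) / (Fintype.card F - 1)
          ≤ T.card := by
        rw [hTcard]
        have hexp : finrank F V - k + 1 ≤ finrank F V - j := by omega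
        exact Nat.div_le_div_right (Nat.sub_le_sub_right
          (Nat.pow_le_pow_right hq1 hexp) 1)
      set I : Finset (Submodule F V) := S.image (fun P => W ⊔ P) with hI
      have hIcard : I.card < T.card := by
        calc I.card ≤ S.card := Finset.card_image_le
          _ < _ := lt_of_lt_of_le hlt hTbig
      have hns : ¬ T ⊆ I := fun hsub => absurd (Finset.card_le_card hsub) (by omega)
      obtain ⟨X, hXT, hXI⟩ := Finset.not_subset.mp hns
      rw [hT, Finset.mem_filter] at hXT
      refine ⟨X, by rw [hXT.2.1, hWrank], fun P hP hle => ?_⟩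
      have hsup : W ⊔ P = X := by
        refine Submodule.eq_of_le_of_finrank_eq (sup_le hXT.2.2 hle) ?_
        rw [finrank_sup_line W P (h1 P hP) (hWavoid P hP), hXT.2.1]
      exact hXI (Finset.mem_image.mpr ⟨P, hP, hsup⟩)
  obtain ⟨W, hW, havoid⟩ := claim k le_rfl
  obtain ⟨P, hP, hPW⟩ := hcov W hW
  exact havoid P hP hPW

end Bounds

end Aux

theorem turNum_r_one (F : Type) [Field F] [Fintype F] (n k : ℕ)
    (hk1 : 1 ≤ k) (hkn : k ≤ n) :
    turNum F n k 1 = ((Fintype.card F) ^ (n - k + 1) - 1) / (Fintype.card F - 1) := by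
  unfold turNum
  classical
  have hfr : finrank F (Fin n → F) = n := Module.finrank_fin_fun F
  haveI : Finite (Submodule F (Fin n → F)) :=
    Finite.of_injective (fun P => (P : Set (Fin n → F))) SetLike.coe_injective
  haveI : Fintype (Submodule F (Fin n → F)) := Fintype.ofFinite _
  obtain ⟨U, hU⟩ := exists_subspace_dim (V := Fin n → F) (n - k + 1) (by rw [hfr]; omega)
  set S₀ : Finset (Submodule F (Fin n → F)) :=
    Finset.univ.filter (fun P => finrank F P = 1 ∧ P ≤ U) with hS₀
  have hcard : S₀.card = ((Fintype.card F) ^ (n - k + 1) - 1) / (Fintype.card F - 1) := by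
    rw [hS₀, ← Fintype.card_subtype, ← Nat.card_eq_fintype_card, card_lines_le_sub U, hU]
  have hmem : ((Fintype.card F) ^ (n - k + 1) - 1) / (Fintype.card F - 1) ∈
      {m | ∃ S : Finset (Submodule F (Fin n → F)), S.card = m ∧
        (∀ W ∈ S, finrank F W = 1) ∧
        ∀ K : Submodule F (Fin n → F), finrank F K = k → ∃ W ∈ S, W ≤ K} := by
    refine ⟨S₀, hcard, fun W hW => (Finset.mem_filter.mp hW).2.1, fun K hK => ?_⟩
    have hsum := Submodule.finrank_sup_add_finrank_inf_eq K U
    have hle : finrank F ((K ⊔ U : Submodule F (Fin n → F))) ≤ n := by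
      have h := Submodule.finrank_le (K ⊔ U : Submodule F (Fin n → F))
      rwa [hfr] at h
    have hpos : 0 < finrank F ((K ⊓ U : Submodule F (Fin n → F))) := by
      rw [hK, hU] at hsum; omega
    haveI : Nontrivial ((K ⊓ U : Submodule F (Fin n → F))) := Module.finrank_pos_iff.mp hpos
    obtain ⟨⟨v, hvmem⟩, hv⟩ := exists_ne (0 : ((K ⊓ U : Submodule F (Fin n → F))))
    have hv0 : v ≠ 0 := fun h => hv (Subtype.ext h)
    refine ⟨Submodule.span F {v}, Finset.mem_filter.mpr
      ⟨Finset.mem_univ _, finrank_span_singleton hv0,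
        (Submodule.span_singleton_le_iff_mem v U).mpr hvmem.2⟩,
      (Submodule.span_singleton_le_iff_mem v K).mpr hvmem.1⟩
  apply le_antisymm
  · exact Nat.sInf_le hmem
  · refine le_csInf ⟨_, hmem⟩ ?_
    rintro m ⟨S, rfl, h1, hcov⟩
    have := lower_bound k hk1 (by rw [hfr]; exact hkn) S h1 hcov
    rwa [hfr] at this
end

section
/- Any set S of fewer than (q^{n−k+1} − 1)/(q − 1) one-dimensional subspaces of F_q^n fails to be a blocking set for k-dimensional subspaces: there exists a k-dimensional subspace of F_q^n containing no member of S. -/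
open Module

variable {F : Type} [Field F] [Fintype F] {n : ℕ}

lemma finrank_sup_span_singleton' (W : Submodule F (Fin n → F)) {v : Fin n → F} (hv : v ∉ W) :
    finrank F ↥(W ⊔ Submodule.span F {v}) = finrank F W + 1 := by
  have hv0 : v ≠ 0 := fun h => hv (h ▸ W.zero_mem)
  have hd : W ⊓ Submodule.span F {v} = ⊥ :=
    ((Submodule.disjoint_span_singleton' hv0).2 hv).eq_bot
  have := Submodule.finrank_sup_add_finrank_inf_eq W (Submodule.span F {v})
  rw [hd, finrank_bot, finrank_span_singleton hv0] at this
  omega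

lemma exists_step' (S : Finset (Submodule F (Fin n → F)))
    (hdim : ∀ B ∈ S, finrank F B = 1)
    (W : Submodule F (Fin n → F)) (hW : ∀ B ∈ S, ¬ B ≤ W)
    (hbound : S.card * (Fintype.card F - 1) + 1 < Fintype.card F ^ (n - finrank F W)) :
    ∃ v : Fin n → F, v ∉ W ∧ ∀ B ∈ S, ¬ B ≤ W ⊔ Submodule.span F {v} := by
  classical
  set q := Fintype.card F with hq
  set j := finrank F W with hj
  have hq2 : 2 ≤ q := Fintype.one_lt_card
  have cardU : ∀ (U : Submodule F (Fin n → F)),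
      (U : Set (Fin n → F)).toFinset.card = q ^ finrank F U := by
    intro U
    rw [Set.toFinset_card]
    rw [show Fintype.card ↥(U : Set (Fin n → F)) = Fintype.card ↥U from
      Fintype.card_congr (Equiv.subtypeEquivRight (fun x => Iff.rfl))]
    exact card_eq_pow_finrank
  have hjn : j < n := by
    by_contra h
    push_neg at h
    have h0 : q ^ (n - j) = 1 := by rw [show n - j = 0 from by omega, pow_zero]
    omega
  set Bad : Finset (Fin n → F) :=
    (W : Set (Fin n → F)).toFinset ∪
      S.biUnion (fun B => (((W ⊔ B : Submodule F (Fin n → F)) : Set (Fin n → F)) \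
        (W : Set (Fin n → F))).toFinset) with hBad
  have hcardW : (W : Set (Fin n → F)).toFinset.card = q ^ j := cardU W
  have hpiece : ∀ B ∈ S,
      ((((W ⊔ B : Submodule F (Fin n → F)) : Set (Fin n → F)) \
        (W : Set (Fin n → F))).toFinset).card ≤ q ^ (j + 1) - q ^ j := by
    intro B hB
    rw [Set.toFinset_diff, Finset.card_sdiff_of_subset]
    · have h1 : ((W ⊔ B : Submodule F (Fin n → F)) : Set (Fin n → F)).toFinset.card
          ≤ q ^ (j + 1) := by
        rw [cardU]
        apply Nat.pow_le_pow_right (by omega)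
        have := Submodule.finrank_sup_add_finrank_inf_eq W B
        rw [hdim B hB] at this
        omega
      rw [hcardW]
      omega
    · intro x hx
      simp only [Set.mem_toFinset, SetLike.mem_coe] at *
      exact Submodule.mem_sup_left hx
  have hBadcard : Bad.card < q ^ n := by
    have h1 : Bad.card ≤ q ^ j + S.card * (q ^ (j + 1) - q ^ j) := by
      calc Bad.card ≤ (W : Set (Fin n → F)).toFinset.card +
          (S.biUnion (fun B => (((W ⊔ B : Submodule F (Fin n → F)) : Set (Fin n → F)) \
            (W : Set (Fin n → F))).toFinset)).card := Finset.card_union_le _ _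
        _ ≤ q ^ j + S.card * (q ^ (j + 1) - q ^ j) := by
            gcongr
            · rw [hcardW]
            · calc _ ≤ ∑ B ∈ S, ((((W ⊔ B : Submodule F (Fin n → F)) : Set (Fin n → F)) \
                  (W : Set (Fin n → F))).toFinset).card := Finset.card_biUnion_le
                _ ≤ ∑ _B ∈ S, (q ^ (j + 1) - q ^ j) := Finset.sum_le_sum hpiece
                _ = S.card * (q ^ (j + 1) - q ^ j) := by rw [Finset.sum_const, smul_eq_mul]
    have h2 : q ^ (j + 1) - q ^ j = q ^ j * (q - 1) := by
      rw [pow_succ, Nat.mul_sub_one]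
    rw [h2] at h1
    have h3 : q ^ j + S.card * (q ^ j * (q - 1)) = q ^ j * (1 + S.card * (q - 1)) := by ring
    have h4 : q ^ j * (1 + S.card * (q - 1)) < q ^ j * q ^ (n - j) := by
      have hpos : 0 < q ^ j := Nat.pow_pos (by omega)
      have : 1 + S.card * (q - 1) < q ^ (n - j) := by omega
      exact (Nat.mul_lt_mul_left hpos).2 this
    have h5 : q ^ j * q ^ (n - j) = q ^ n := by
      rw [← pow_add]
      congr 1
      omega
    omega
  have hex : ∃ v, v ∉ Bad := by
    by_contra h
    push_neg at h
    have hle : (Finset.univ : Finset (Fin n → F)).card ≤ Bad.card :=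
      Finset.card_le_card (fun x _ => h x)
    rw [Finset.card_univ, Fintype.card_fun, Fintype.card_fin, ← hq] at hle
    omega
  obtain ⟨v, hv⟩ := hex
  rw [hBad, Finset.mem_union, Finset.mem_biUnion] at hv
  push_neg at hv
  obtain ⟨hv1, hv2⟩ := hv
  rw [Set.mem_toFinset] at hv1
  refine ⟨v, hv1, fun B hB hle => ?_⟩
  have hnle : ¬ B ≤ W := hW B hB
  have hinf : W ⊓ B = ⊥ := by
    by_contra h
    have h1 : finrank F ↥(W ⊓ B) ≤ 1 := by
      have := Submodule.finrank_mono (inf_le_right : W ⊓ B ≤ B)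
      rw [hdim B hB] at this
      omega
    interval_cases h2 : finrank F ↥(W ⊓ B)
    · exact h (Submodule.finrank_eq_zero.1 h2)
    · have : W ⊓ B = B := Submodule.eq_of_le_of_finrank_eq inf_le_right (by rw [h2, hdim B hB])
      exact hnle (this ▸ inf_le_left)
  have hfr1 : finrank F ↥(W ⊔ B) = j + 1 := by
    have := Submodule.finrank_sup_add_finrank_inf_eq W B
    rw [hinf, finrank_bot, hdim B hB] at this
    omega
  have hfr2 : finrank F ↥(W ⊔ Submodule.span F {v}) = j + 1 :=
    finrank_sup_span_singleton' W hv1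
  have hle2 : W ⊔ B ≤ W ⊔ Submodule.span F {v} := sup_le le_sup_left hle
  have heq : W ⊔ B = W ⊔ Submodule.span F {v} :=
    Submodule.eq_of_le_of_finrank_eq hle2 (by rw [hfr1, hfr2])
  have hvmem : v ∈ W ⊔ B := by
    rw [heq]
    exact Submodule.mem_sup_right (Submodule.mem_span_singleton_self v)
  have hfin := hv2 B hB
  rw [Set.mem_toFinset] at hfin
  exact hfin ⟨hvmem, hv1⟩

lemma grow' (S : Finset (Submodule F (Fin n → F)))
    (hdim : ∀ B ∈ S, finrank F B = 1) (k : ℕ) (hkn : k ≤ n)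
    (hbound : S.card * (Fintype.card F - 1) + 1 < Fintype.card F ^ (n - k + 1)) :
    ∀ d (W : Submodule F (Fin n → F)), finrank F W + d = k → (∀ B ∈ S, ¬ B ≤ W) →
      ∃ W' : Submodule F (Fin n → F), finrank F W' = k ∧ ∀ B ∈ S, ¬ B ≤ W' := by
  intro d
  induction d with
  | zero => intro W hW hav; exact ⟨W, by omega, hav⟩
  | succ d ih =>
    intro W hW hav
    have hq2 : 2 ≤ Fintype.card F := Fintype.one_lt_card
    have hstep : S.card * (Fintype.card F - 1) + 1 <
        Fintype.card F ^ (n - finrank F W) := by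
      calc S.card * (Fintype.card F - 1) + 1 < Fintype.card F ^ (n - k + 1) := hbound
        _ ≤ Fintype.card F ^ (n - finrank F W) :=
          Nat.pow_le_pow_right (by omega) (by omega)
    obtain ⟨v, hv, hv2⟩ := exists_step' S hdim W hav hstep
    have := finrank_sup_span_singleton' W hv
    exact ih (W ⊔ Submodule.span F {v}) (by omega) hv2

theorem small_blocking_set_fails (F : Type) [Field F] [Fintype F] (n k : ℕ)
    (hk1 : 1 ≤ k) (hkn : k ≤ n)
    (S : Finset (Submodule F (Fin n → F)))
    (hdim : ∀ B ∈ S, finrank F B = 1)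
    (hcard : S.card ≤ ((Fintype.card F) ^ (n - k + 1) - 1) / (Fintype.card F - 1) - 1) :
    ∃ W : Submodule F (Fin n → F), finrank F W = k ∧ ∀ B ∈ S, ¬ B ≤ W := by
  set q := Fintype.card F with hq
  have hq2 : 2 ≤ q := Fintype.one_lt_card
  set m := n - k + 1 with hm
  have hm1 : 1 ≤ m := by omega
  have key : (∑ i ∈ Finset.range m, q ^ i) * (q - 1) + 1 = q ^ m := by
    have := geom_sum_mul_add (q - 1) m
    rwa [Nat.sub_add_cancel (by omega)] at this
  have hgs : (q ^ m - 1) / (q - 1) = ∑ i ∈ Finset.range m, q ^ i :=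
    (Nat.geomSum_eq hq2 m).symm
  rw [hgs] at hcard
  have hqm : q ≤ q ^ m := Nat.le_self_pow (by omega) q
  have hbound : S.card * (q - 1) + 1 < q ^ m := by
    have h1 : S.card * (q - 1) ≤ ((∑ i ∈ Finset.range m, q ^ i) - 1) * (q - 1) :=
      Nat.mul_le_mul_right _ hcard
    have h2 : ((∑ i ∈ Finset.range m, q ^ i) - 1) * (q - 1) =
        (∑ i ∈ Finset.range m, q ^ i) * (q - 1) - (q - 1) := by
      rw [Nat.sub_mul, one_mul]
    omega
  have hbot : ∀ B ∈ S, ¬ B ≤ (⊥ : Submodule F (Fin n → F)) := by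
    intro B hB h
    have hBbot : B = ⊥ := le_bot_iff.1 h
    rw [hBbot] at hB
    have := hdim _ hB
    rw [finrank_bot] at this
    omega
  obtain ⟨W, hW1, hW2⟩ := grow' S hdim k hkn hbound k (⊥ : Submodule F (Fin n → F))
    (by rw [finrank_bot, Nat.zero_add]) hbot
  exact ⟨W, hW1, hW2⟩
end

section
/- If Q is a subspace of F_q^n of dimension ℓ < n and S is a set of 1-dimensional subspaces none of which is contained in Q, with |S|·(q^{ℓ+1} − q^ℓ) + q^ℓ − 1 < q^n − 1, then there exists a nonzero vector α ∈ F_q^n such that the subspace spanned by Q and α (of dimension ℓ+1) contains no element of S. -/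
open Module

theorem extend_avoiding_subspace (F : Type) [Field F] [Fintype F] (n ℓ : ℕ)
    (hℓ : ℓ < n)
    (Q : Submodule F (Fin n → F)) (hQ : finrank F Q = ℓ)
    (S : Finset (Submodule F (Fin n → F)))
    (hdim : ∀ B ∈ S, finrank F B = 1)
    (hnot : ∀ B ∈ S, ¬ B ≤ Q)
    (hcount : S.card * ((Fintype.card F) ^ (ℓ + 1) - (Fintype.card F) ^ ℓ)
        + (Fintype.card F) ^ ℓ - 1 < (Fintype.card F) ^ n - 1) :
    ∃ α : Fin n → F, α ≠ 0 ∧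
      finrank F ↥(Q ⊔ Submodule.span F {α}) = ℓ + 1 ∧
      ∀ B ∈ S, ¬ B ≤ Q ⊔ Submodule.span F {α} := by
  classical
  set V := Fin n → F with hV
  set q := Fintype.card F with hq
  have hq1 : 1 ≤ q := Fintype.card_pos
  have hqn : 1 ≤ q ^ n := Nat.one_le_pow _ _ hq1
  have hql : 1 ≤ q ^ ℓ := Nat.one_le_pow _ _ hq1
  have hcount' : S.card * (q ^ (ℓ + 1) - q ^ ℓ) + q ^ ℓ < q ^ n := by omega
  -- each Q ⊔ B has finrank ℓ + 1
  have hsup : ∀ B ∈ S, finrank F ↥(Q ⊔ B) = ℓ + 1 := by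
    intro B hB
    have h1 : finrank F ↥(Q ⊔ B) + finrank F ↥(Q ⊓ B) = ℓ + 1 := by
      rw [Submodule.finrank_sup_add_finrank_inf_eq, hQ, hdim B hB]
    have h2 : finrank F ↥(Q ⊓ B) ≤ 1 := by
      rw [← hdim B hB]; exact Submodule.finrank_mono inf_le_right
    have h3 : finrank F ↥(Q ⊓ B) ≠ 1 := by
      intro h
      have := Submodule.eq_of_le_of_finrank_eq (inf_le_right : Q ⊓ B ≤ B)
        (by rw [h, hdim B hB])
      exact hnot B hB (this ▸ (inf_le_left : Q ⊓ B ≤ Q))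
    omega
  -- bad set
  let bad : Finset V := (Q : Set V).toFinset ∪
    S.biUnion (fun B => ((Q ⊔ B : Submodule F V) : Set V).toFinset \ (Q : Set V).toFinset)
  have hcardQ : (Q : Set V).toFinset.card = q ^ ℓ := by
    rw [Set.toFinset_card, ← hQ]; exact card_eq_pow_finrank (K := F)
  have hbadcard : bad.card ≤ q ^ ℓ + S.card * (q ^ (ℓ + 1) - q ^ ℓ) := by
    refine le_trans (Finset.card_union_le _ _) ?_
    gcongr
    · exact hcardQ.le
    refine le_trans (Finset.card_biUnion_le) ?_
    refine Finset.sum_le_card_nsmul S _ _ ?_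
    intro B hB
    have hsub : (Q : Set V).toFinset ⊆ ((Q ⊔ B : Submodule F V) : Set V).toFinset := by
      intro x hx
      rw [Set.mem_toFinset] at *
      exact (le_sup_left : Q ≤ Q ⊔ B) hx
    rw [Finset.card_sdiff_of_subset hsub, hcardQ]
    have : ((Q ⊔ B : Submodule F V) : Set V).toFinset.card = q ^ (ℓ + 1) := by
      rw [Set.toFinset_card, ← hsup B hB]; exact card_eq_pow_finrank (K := F)
    rw [this]
  -- find α outside bad
  have hcardV : Fintype.card V = q ^ n := by
    show Fintype.card (Fin n → F) = q ^ n
    rw [Fintype.card_fun, Fintype.card_fin]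
  have : ∃ α : V, α ∉ bad := by
    by_contra h
    push_neg at h
    have : (Finset.univ : Finset V) ⊆ bad := fun x _ => h x
    have := Finset.card_le_card this
    rw [Finset.card_univ, hcardV] at this
    omega
  obtain ⟨α, hα⟩ := this
  have hαQ : α ∉ Q := by
    intro h
    exact hα (Finset.mem_union_left _ (Set.mem_toFinset.mpr h))
  have hαB : ∀ B ∈ S, α ∉ (Q ⊔ B : Submodule F V) := by
    intro B hB h
    exact hα (Finset.mem_union_right _ (Finset.mem_biUnion.mpr ⟨B, hB,
      Finset.mem_sdiff.mpr ⟨Set.mem_toFinset.mpr h, fun hc => hαQ (Set.mem_toFinset.mp hc)⟩⟩))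
  have hα0 : α ≠ 0 := fun h => hαQ (h ▸ Q.zero_mem)
  have hrank : finrank F ↥(Q ⊔ Submodule.span F {α}) = ℓ + 1 := by
    have hdisj : Disjoint Q (Submodule.span F {α}) :=
      Submodule.disjoint_span_singleton.mpr (fun h => absurd h hαQ)
    have := Submodule.finrank_sup_add_finrank_inf_eq Q (Submodule.span F {α})
    rw [hdisj.eq_bot, finrank_bot, hQ, finrank_span_singleton hα0] at this
    omega
  refine ⟨α, hα0, hrank, ?_⟩
  intro B hB hle
  have h1 : Q ⊔ B ≤ Q ⊔ Submodule.span F {α} := sup_le le_sup_left hle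
  have h2 : Q ⊔ B = Q ⊔ Submodule.span F {α} :=
    Submodule.eq_of_le_of_finrank_eq h1 (by rw [hsup B hB, hrank])
  exact hαB B hB (h2 ▸ ((le_sup_right : Submodule.span F {α} ≤ _)
    (Submodule.mem_span_singleton_self α)))
end

section
/- C_q(n, n−1, k) = (q^{k+1} − 1)/(q − 1) for 1 ≤ k ≤ n−1: the minimum number of hyperplanes of F_q^n needed to contain every k-dimensional subspace in at least one of them equals (q^{k+1} − 1)/(q − 1). -/
open Module

section Aux

variable {F : Type} [Field F] [Fintype F]

open scoped Classical

/-- The linear functional on `Fin n → F` with coefficient vector `c` on the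
first `m` coordinates. -/
noncomputable def auxFc {m n : ℕ} (h : m ≤ n) (c : Fin m → F) : (Fin n → F) →ₗ[F] F :=
  ∑ i, c i • LinearMap.proj (Fin.castLE h i)

lemma auxFc_apply {m n : ℕ} (h : m ≤ n) (c : Fin m → F) (x : Fin n → F) :
    auxFc h c x = ∑ i, c i * x (Fin.castLE h i) := by
  simp [auxFc]

lemma auxFc_single {m n : ℕ} (h : m ≤ n) (c : Fin m → F) (j : Fin m) :
    auxFc h c (Pi.single (Fin.castLE h j) 1) = c j := by
  classical
  rw [auxFc_apply, Finset.sum_eq_single j]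
  · simp
  · intro i _ hij
    have : Fin.castLE h j ≠ Fin.castLE h i := by
      simpa [Fin.castLE_inj] using (Ne.symm hij)
    simp [Pi.single_apply, this]
  · simp

lemma auxFc_smul {m n : ℕ} (h : m ≤ n) (a : F) (c : Fin m → F) :
    auxFc h (a • c) = a • auxFc h c := by
  ext x
  simp [auxFc_apply, Finset.mul_sum, mul_assoc]

lemma finrank_ker_auxFc {m n : ℕ} (h : m ≤ n) {c : Fin m → F} (hc : c ≠ 0) :
    finrank F (LinearMap.ker (auxFc h c)) = n - 1 := by
  classical
  obtain ⟨j, hj⟩ : ∃ j, c j ≠ 0 := by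
    by_contra hcon
    push_neg at hcon
    exact hc (funext hcon)
  have hr : LinearMap.range (auxFc h c) = ⊤ := by
    rw [LinearMap.range_eq_top]
    intro z
    refine ⟨(z / c j) • (Pi.single (Fin.castLE h j) 1 : Fin n → F), ?_⟩
    rw [map_smul, auxFc_single]
    field_simp
    rw [smul_eq_mul, div_mul_cancel₀ _ hj]
  have hrn := LinearMap.finrank_range_add_finrank_ker (auxFc h c)
  rw [hr, finrank_top, Module.finrank_self, Module.finrank_fin_fun] at hrn
  omega

lemma dual_eval {m : ℕ} (φ : (Fin m → F) →ₗ[F] F) (y : Fin m → F) :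
    φ y = ∑ i, y i * φ (Pi.single i 1) := by
  classical
  conv_lhs => rw [← Finset.univ_sum_single y, map_sum]
  refine Finset.sum_congr rfl fun i _ => ?_
  have : (Pi.single i (y i) : Fin m → F) = y i • (Pi.single i 1 : Fin m → F) := by
    ext j
    rcases eq_or_ne j i with rfl | hji
    · simp
    · simp [Pi.single_apply, hji]
  rw [this, map_smul, smul_eq_mul]

lemma auxFc_ker_eq {m n : ℕ} (h : m ≤ n) {c c' : Fin m → F} (hc : c ≠ 0)
    (heq : LinearMap.ker (auxFc h c) = LinearMap.ker (auxFc h c')) :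
    ∃ a : F, c' = a • c := by
  classical
  obtain ⟨j, hj⟩ : ∃ j, c j ≠ 0 := by
    by_contra hcon
    push_neg at hcon
    exact hc (funext hcon)
  set x : Fin n → F := (c j)⁻¹ • (Pi.single (Fin.castLE h j) 1 : Fin n → F) with hx
  have hfx : auxFc h c x = 1 := by
    rw [hx, map_smul, auxFc_single, smul_eq_mul, inv_mul_cancel₀ hj]
  refine ⟨auxFc h c' x, funext fun i => ?_⟩
  have hker : (Pi.single (Fin.castLE h i) 1 : Fin n → F) - (c i) • x ∈ LinearMap.ker (auxFc h c) := by
    rw [LinearMap.mem_ker, map_sub, map_smul, auxFc_single, hfx, smul_eq_mul, mul_one, sub_self]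
  rw [heq, LinearMap.mem_ker, map_sub, map_smul, auxFc_single, sub_eq_zero, smul_eq_mul] at hker
  rw [hker]
  simp [mul_comm]

variable (F) in
/-- The finset of kernels of the functionals `auxFc h c`, `c ≠ 0`. -/
noncomputable def hyperFam {m n : ℕ} (h : m ≤ n) : Finset (Submodule F (Fin n → F)) :=
  (Finset.univ.filter (fun c : Fin m → F => c ≠ 0)).image
    (fun c => LinearMap.ker (auxFc h c))

lemma card_filter_ne_zero {α : Type*} [Fintype α] [DecidableEq α] [Zero α] :
    (Finset.univ.filter (fun a : α => a ≠ 0)).card = Fintype.card α - 1 := by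
  have : (Finset.univ.filter (fun a : α => a ≠ 0)) = Finset.univ.erase 0 := by
    ext a
    simp [Finset.mem_erase, and_comm]
  rw [this, Finset.card_erase_of_mem (Finset.mem_univ _), Finset.card_univ]

lemma card_hyperFam {m n : ℕ} (h : m ≤ n) :
    (hyperFam F h).card = (Fintype.card F ^ m - 1) / (Fintype.card F - 1) := by
  unfold hyperFam
  set q := Fintype.card F with hq
  have hq1 : 1 < q := Fintype.one_lt_card
  set S0 := (Finset.univ.filter (fun c : Fin m → F => c ≠ 0)) with hS0
  set f := (fun c : Fin m → F => LinearMap.ker (auxFc (F := F) h c)) with hf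
  have hS0card : S0.card = q ^ m - 1 := by
    rw [hS0, card_filter_ne_zero]
    congr 1
    rw [Fintype.card_fun, Fintype.card_fin]
  have hfiber : ∀ b ∈ S0.image f, (S0.filter (fun c => f c = b)).card = q - 1 := by
    intro b hb
    obtain ⟨c, hc, rfl⟩ := Finset.mem_image.1 hb
    have hc0 : c ≠ 0 := by simpa [hS0] using hc
    have hset : S0.filter (fun c' => f c' = f c)
        = (Finset.univ.filter (fun a : F => a ≠ 0)).image (fun a => a • c) := by
      ext c'
      simp only [Finset.mem_filter, Finset.mem_image, Finset.mem_univ, true_and, hS0]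
      constructor
      · rintro ⟨hc', heq⟩
        obtain ⟨a, rfl⟩ := auxFc_ker_eq h hc0 heq.symm
        have ha : a ≠ 0 := by
          rintro rfl
          simp at hc'
        exact ⟨a, ha, rfl⟩
      · rintro ⟨a, ha, rfl⟩
        refine ⟨by simp [smul_eq_zero, ha, hc0], ?_⟩
        rw [hf]
        simp only
        rw [auxFc_smul, LinearMap.ker_smul _ _ ha]
    have hinj : Function.Injective (fun a : F => a • c) := by
      intro a b hab
      obtain ⟨j, hj⟩ : ∃ j, c j ≠ 0 := by
        by_contra hcon
        push_neg at hcon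
        exact hc0 (funext hcon)
      have := congrFun hab j
      simpa [hj] using mul_right_cancel₀ hj this
    rw [hset, Finset.card_image_of_injective _ hinj, card_filter_ne_zero]
  have hkey := Finset.card_eq_sum_card_image f S0
  rw [Finset.sum_congr rfl hfiber, Finset.sum_const, smul_eq_mul, hS0card] at hkey
  rw [hkey, Nat.mul_div_cancel _ (by omega : 0 < q - 1)]

lemma theta_eq (m : ℕ) :
    (Fintype.card F ^ m - 1) / (Fintype.card F - 1)
      = ∑ i ∈ Finset.range m, Fintype.card F ^ i := by
  have hq1 : 1 < Fintype.card F := Fintype.one_lt_card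
  rw [← geom_sum_mul_of_one_le (le_of_lt hq1) m,
    Nat.mul_div_cancel _ (by omega : 0 < Fintype.card F - 1)]

lemma theta_mono {a b : ℕ} (hab : a ≤ b) :
    (Fintype.card F ^ a - 1) / (Fintype.card F - 1)
      ≤ (Fintype.card F ^ b - 1) / (Fintype.card F - 1) := by
  rw [theta_eq, theta_eq]
  exact Finset.sum_le_sum_of_subset (Finset.range_subset_range.2 hab)

lemma mem_hyperFam_finrank {m n : ℕ} (h : m ≤ n) {W : Submodule F (Fin n → F)}
    (hW : W ∈ hyperFam F h) : finrank F W = n - 1 := by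
  unfold hyperFam at hW
  obtain ⟨c, hc, rfl⟩ := Finset.mem_image.1 hW
  exact finrank_ker_auxFc h (by simpa using hc)

/-- Main avoidance lemma: fewer than `(q^(k+1)-1)/(q-1)` hyperplanes cannot cover
all `k`-dimensional subspaces. -/
lemma avoid (k : ℕ) : ∀ n : ℕ, ∀ (V : Type) (_ : AddCommGroup V), ∀ (_ : Module F V)
    (_ : FiniteDimensional F V),
    finrank F V = n → k + 1 ≤ n →
    ∀ S : Finset (Submodule F V), (∀ W ∈ S, finrank F W = n - 1) →
    S.card < (Fintype.card F ^ (k + 1) - 1) / (Fintype.card F - 1) →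
    ∃ R : Submodule F V, finrank F R = k ∧ ∀ W ∈ S, ¬ R ≤ W := by
  intro n
  induction n using Nat.strong_induction_on with
  | _ n IH =>
  intro V _ _ _ hV hkn S hS hcard
  classical
  have hn1 : 1 ≤ n := by omega
  let e : (Fin n → F) ≃ₗ[F] V :=
    LinearEquiv.ofFinrankEq _ _ (by rw [Module.finrank_fin_fun, hV])
  set T : Finset (Submodule F V) :=
    (hyperFam F (le_refl n)).image (Submodule.map (e : (Fin n → F) →ₗ[F] V)) with hTdef
  have hinj : Function.Injective (Submodule.map (e : (Fin n → F) →ₗ[F] V)) :=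
    Submodule.map_injective_of_injective (f := (e : (Fin n → F) →ₗ[F] V)) e.injective
  have hTcard : T.card = (Fintype.card F ^ n - 1) / (Fintype.card F - 1) := by
    rw [hTdef, Finset.card_image_of_injective _ hinj, card_hyperFam]
  have hlt : S.card < T.card := by
    rw [hTcard]
    exact lt_of_lt_of_le hcard (theta_mono hkn)
  obtain ⟨H, hHT, hHS⟩ : ∃ H ∈ T, H ∉ S := by
    by_contra hcon
    push_neg at hcon
    exact absurd (Finset.card_le_card hcon) (not_le.2 hlt)
  rw [hTdef] at hHT
  have hH : finrank F H = n - 1 := by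
    obtain ⟨W0, hW0, rfl⟩ := Finset.mem_image.1 hHT
    rw [LinearEquiv.finrank_map_eq]
    exact mem_hyperFam_finrank _ hW0
  by_cases hnk : n = k + 1
  · refine ⟨H, by omega, fun W hW hle => hHS ?_⟩
    have : H = W := Submodule.eq_of_le_of_finrank_eq hle (by rw [hS W hW, hH])
    rwa [this]
  · -- inductive step: n > k + 1
    have hn2 : k + 2 ≤ n := by omega
    have hHrank : finrank F ↥H = n - 1 := hH
    set S' := S.image (Submodule.comap H.subtype) with hS'def
    have hS'dim : ∀ W' ∈ S', finrank F W' = (n - 1) - 1 := by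
      intro W' hW'
      obtain ⟨W, hW, rfl⟩ := Finset.mem_image.1 hW'
      have hWH : W ≠ H := fun hcon => hHS (hcon ▸ hW)
      have hsup : W ⊔ H = ⊤ := by
        have hWle : W < W ⊔ H := by
          rcases lt_or_eq_of_le (le_sup_left : W ≤ W ⊔ H) with h' | h'
          · exact h'
          · exfalso
            have hHW : H ≤ W := by
              rw [h']
              exact le_sup_right
            exact hWH ((Submodule.eq_of_le_of_finrank_eq hHW
              (by rw [hS W hW, hH])).symm)
        have h2 : n - 1 < finrank F ↥(W ⊔ H) := by
          rw [← hS W hW]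
          exact Submodule.finrank_lt_finrank_of_lt hWle
        have h3 : finrank F ↥(W ⊔ H) ≤ n := by
          rw [← hV]
          exact Submodule.finrank_le _
        apply Submodule.eq_top_of_finrank_eq
        rw [hV]
        omega
      have hinf : finrank F ↥(W ⊓ H) = n - 2 := by
        have hkey := Submodule.finrank_sup_add_finrank_inf_eq W H
        rw [hsup, hS W hW, hH, finrank_top, hV] at hkey
        omega
      have hcomap : finrank F (Submodule.comap H.subtype W) = finrank F ↥(H ⊓ W) := by
        rw [← Submodule.finrank_map_subtype_eq H (Submodule.comap H.subtype W),
          Submodule.map_comap_subtype]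
      rw [hcomap, inf_comm, hinf]
      omega
    have hS'card : S'.card < (Fintype.card F ^ (k + 1) - 1) / (Fintype.card F - 1) :=
      lt_of_le_of_lt (Finset.card_image_le) hcard
    obtain ⟨R', hR'rank, hR'⟩ := IH (n - 1) (by omega) ↥H inferInstance inferInstance
      inferInstance hHrank (by omega) S' hS'dim hS'card
    refine ⟨Submodule.map H.subtype R', ?_, ?_⟩
    · rw [Submodule.finrank_map_subtype_eq]
      exact hR'rank
    · intro W hW hle
      exact hR' (Submodule.comap H.subtype W) (Finset.mem_image_of_mem _ hW)
        (Submodule.map_le_iff_le_comap.1 hle)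

end Aux

theorem covNum_hyperplanes (F : Type) [Field F] [Fintype F] (n k : ℕ)
    (hk1 : 1 ≤ k) (hkn : k ≤ n - 1) :
    covNum F n (n - 1) k = ((Fintype.card F) ^ (k + 1) - 1) / (Fintype.card F - 1) := by
  classical
  have hq1 : 1 < Fintype.card F := Fintype.one_lt_card
  have hn2 : 2 ≤ n := by
    rcases n with _ | _ | n <;> omega
  have hkn1 : k + 1 ≤ n := by omega
  set θ := ((Fintype.card F) ^ (k + 1) - 1) / (Fintype.card F - 1) with hθ
  have hmem : θ ∈ {m | ∃ S : Finset (Submodule F (Fin n → F)), S.card = m ∧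
      (∀ W ∈ S, finrank F W = n - 1) ∧
      ∀ R : Submodule F (Fin n → F), finrank F R = k → ∃ W ∈ S, R ≤ W} := by
    refine ⟨hyperFam F hkn1, card_hyperFam hkn1, fun W hW => mem_hyperFam_finrank hkn1 hW, ?_⟩
    intro R hR
    set π : (Fin n → F) →ₗ[F] (Fin (k + 1) → F) := LinearMap.funLeft F F (Fin.castLE hkn1)
      with hπ
    have hlt : Submodule.map π R < ⊤ := by
      rw [lt_top_iff_ne_top]
      intro hcon
      have h1 : finrank F (Submodule.map π R) ≤ k :=
        le_trans (Submodule.finrank_map_le π R) (le_of_eq hR)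
      rw [hcon, finrank_top, Module.finrank_fin_fun] at h1
      omega
    obtain ⟨φ, hφ0, hφ⟩ := Submodule.exists_dual_map_eq_bot_of_lt_top hlt inferInstance
    set c : Fin (k + 1) → F := fun i => φ (Pi.single i 1) with hc
    have hc0 : c ≠ 0 := by
      intro hcon
      have hval : ∀ i, φ (Pi.single i 1) = 0 := fun i => by
        simpa [hc] using congrFun hcon i
      apply hφ0
      refine LinearMap.ext fun y => ?_
      rw [dual_eval φ y]
      simp [hval]
    refine ⟨LinearMap.ker (auxFc hkn1 c), ?_, ?_⟩
    · unfold hyperFam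
      exact Finset.mem_image_of_mem _ (by simp [hc0])
    · intro x hx
      rw [LinearMap.mem_ker, auxFc_apply]
      have hπx : φ (π x) = 0 := by
        have hmem' : φ (π x) ∈ Submodule.map φ (Submodule.map π R) :=
          Submodule.mem_map_of_mem (Submodule.mem_map_of_mem hx)
        rw [hφ] at hmem'
        exact (Submodule.mem_bot F).mp hmem'
      rw [dual_eval φ (π x)] at hπx
      rw [← hπx]
      refine Finset.sum_congr rfl fun i _ => ?_
      rw [hπ]
      simp only [LinearMap.funLeft_apply, hc]
      ring
  rw [covNum]
  apply le_antisymm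
  · exact Nat.sInf_le hmem
  · apply le_csInf ⟨θ, hmem⟩
    rintro m ⟨S, hcard, hdim, hcov⟩
    by_contra hlt
    push_neg at hlt
    obtain ⟨R, hRk, hR⟩ := avoid k n (Fin n → F) inferInstance inferInstance inferInstance
      (Module.finrank_fin_fun F) hkn1 S hdim (by rw [hcard]; exact hlt)
    obtain ⟨W, hW, hle⟩ := hcov R hRk
    exact hR W hW hle
end

section
/- C_q(n, k, r) ≥ ⌈((q^n − 1)/(q^k − 1)) · C_q(n−1, k−1, r−1)⌉ (q-analogue of the Schönheim bound). -/
open Module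

-- superspace of given dimension
lemma exists_superspace {F : Type} [Field F] {V : Type} [AddCommGroup V] [Module F V]
    [FiniteDimensional F V] :
    ∀ (d k : ℕ) (R : Submodule F V), finrank F R ≤ k → k ≤ finrank F V →
      k - finrank F R = d → ∃ W : Submodule F V, R ≤ W ∧ finrank F W = k := by
  intro d
  induction d with
  | zero =>
    intro k R hRk hkV hd
    exact ⟨R, le_rfl, by omega⟩
  | succ d ih =>
    intro k R hRk hkV hd
    have hlt : finrank F R < finrank F V := by omega
    obtain ⟨m, hm⟩ := Submodule.exists_of_finrank_lt R hlt
    have hmR : m ∉ R := by simpa using hm 1 one_ne_zero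
    have hm0 : m ≠ 0 := fun h => hmR (h ▸ R.zero_mem)
    have hdisj : R ⊓ (F ∙ m) = ⊥ := by
      rw [eq_bot_iff]
      rintro x ⟨hxR, hxm⟩
      obtain ⟨c, rfl⟩ := Submodule.mem_span_singleton.mp hxm
      rcases eq_or_ne c 0 with rfl | hc
      · simp
      · exact absurd hxR (hm c hc)
    have hrank : finrank F ↥(R ⊔ (F ∙ m)) = finrank F R + 1 := by
      have := Submodule.finrank_sup_add_finrank_inf_eq R (F ∙ m)
      rw [hdisj, finrank_bot, finrank_span_singleton hm0] at this
      omega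
    obtain ⟨W, hW1, hW2⟩ := ih k (R ⊔ (F ∙ m)) (by omega) hkV (by omega)
    exact ⟨W, le_trans le_sup_left hW1, hW2⟩

lemma covNum_spec (F : Type) [Field F] [Fintype F] (n k r : ℕ) (hrk : r ≤ k) (hkn : k ≤ n) :
    ∃ S : Finset (Submodule F (Fin n → F)), S.card = covNum F n k r ∧
      (∀ W ∈ S, finrank F W = k) ∧
      ∀ R : Submodule F (Fin n → F), finrank F R = r → ∃ W ∈ S, R ≤ W := by
  classical
  have hfin : Finite (Submodule F (Fin n → F)) :=
    Finite.of_injective (fun W => (W : Set (Fin n → F))) SetLike.coe_injective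
  have : Fintype (Submodule F (Fin n → F)) := Fintype.ofFinite _
  have hV : finrank F (Fin n → F) = n := by simp [Module.finrank_pi]
  have hne : (covNum F n k r) ∈ {m | ∃ S : Finset (Submodule F (Fin n → F)), S.card = m ∧
      (∀ W ∈ S, finrank F W = k) ∧
      ∀ R : Submodule F (Fin n → F), finrank F R = r → ∃ W ∈ S, R ≤ W} := by
    unfold covNum
    apply Nat.sInf_mem
    refine ⟨(Finset.univ.filter (fun W : Submodule F (Fin n → F) => finrank F W = k)).card,
      Finset.univ.filter (fun W => finrank F W = k), rfl, ?_, ?_⟩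
    · intro W hW; exact (Finset.mem_filter.mp hW).2
    · intro R hR
      obtain ⟨W, hRW, hWk⟩ := exists_superspace (k - finrank F R) k R (by omega) (by omega) rfl
      exact ⟨W, Finset.mem_filter.mpr ⟨Finset.mem_univ _, hWk⟩, hRW⟩
  obtain ⟨S, h1, h2, h3⟩ := hne
  exact ⟨S, h1, h2, h3⟩
theorem schonheim_bound (F : Type) [Field F] [Fintype F] (n k r : ℕ)
    (hr1 : 1 ≤ r) (hrk : r ≤ k) (hkn : k ≤ n) :
    (⌈(((Fintype.card F : ℚ)) ^ n - 1) / ((Fintype.card F : ℚ) ^ k - 1) *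
        (covNum F (n - 1) (k - 1) (r - 1) : ℚ)⌉ : ℤ) ≤ (covNum F n k r : ℤ) := by
  classical
  set q := Fintype.card F with hq
  have hq2 : 2 ≤ q := Fintype.one_lt_card
  have hn1 : 1 ≤ n := le_trans (le_trans hr1 hrk) hkn
  have hk1 : 1 ≤ k := le_trans hr1 hrk
  have hqk1 : (1:ℚ) < (q:ℚ) ^ k := by
    apply one_lt_pow₀ (by exact_mod_cast hq2) (by omega)
  have hqn1 : (1:ℚ) < (q:ℚ) ^ n := by
    apply one_lt_pow₀ (by exact_mod_cast hq2) (by omega)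
  obtain ⟨S, hScard, hSdim, hScov⟩ := covNum_spec F n k r hrk hkn
  have hV : finrank F (Fin n → F) = n := by simp [Module.finrank_pi]
  -- cardinality of each member as a set
  have hWcard : ∀ W ∈ S, Fintype.card W = q ^ k := by
    intro W hW
    rw [card_eq_pow_finrank (K := F) (V := W), hSdim W hW]
  -- double counting
  set U : Finset (Fin n → F) := Finset.univ.erase 0 with hU
  have hUcard : U.card = q ^ n - 1 := by
    rw [hU, Finset.card_erase_of_mem (Finset.mem_univ 0), Finset.card_univ, Fintype.card_fun]
    simp
    rfl
  have hcount : ∀ W ∈ S, (U.filter (· ∈ W)).card = q ^ k - 1 := by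
    intro W hW
    have h1 : U.filter (· ∈ W) = (Finset.univ.filter (· ∈ W)).erase 0 := by
      ext x
      simp [hU, Finset.mem_erase, Finset.mem_filter, and_comm]
    rw [h1, Finset.card_erase_of_mem (by simp [W.zero_mem]), ← Fintype.card_subtype,
      Fintype.card_congr (Equiv.refl _)]
    rw [show Fintype.card {x // x ∈ W} = Fintype.card W from rfl, hWcard W hW]
  have hsum : ∑ v ∈ U, ((S.filter (fun W => v ∈ W)).card : ℚ)
      = (S.card : ℚ) * ((q:ℚ) ^ k - 1) := by
    have e1 : ∀ v, ((S.filter (fun W => v ∈ W)).card : ℚ)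
        = ∑ W ∈ S, if v ∈ W then (1:ℚ) else 0 := by
      intro v; rw [Finset.card_filter]; push_cast; rfl
    simp_rw [e1]
    rw [Finset.sum_comm]
    have e2 : ∀ W ∈ S, (∑ v ∈ U, if v ∈ W then (1:ℚ) else 0) = (q:ℚ) ^ k - 1 := by
      intro W hW
      rw [Finset.sum_boole, hcount W hW]
      have : 1 ≤ q ^ k := Nat.one_le_pow _ _ (by omega)
      push_cast [this]
      ring
    rw [Finset.sum_congr rfl e2, Finset.sum_const, nsmul_eq_mul]
  -- pigeonhole: some nonzero v lies in few members
  have hUne : U.Nonempty := by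
    have : Nontrivial (Fin n → F) := by
      apply Fintype.one_lt_card_iff_nontrivial.mp
      rw [Fintype.card_fun]
      simpa using Nat.one_lt_pow (by omega : n ≠ 0) (by omega : 1 < q)
    obtain ⟨x, hx⟩ := exists_ne (0 : Fin n → F)
    exact ⟨x, by simp [hU, hx]⟩
  obtain ⟨v, hvU, hvle⟩ := Finset.exists_le_of_sum_le hUne
    (f := fun v => ((S.filter (fun W => v ∈ W)).card : ℚ))
    (g := fun _ => ((q:ℚ) ^ k - 1) / ((q:ℚ) ^ n - 1) * S.card)
    (by
      rw [hsum, Finset.sum_const, hUcard, nsmul_eq_mul]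
      have h1 : 1 ≤ q ^ n := Nat.one_le_pow _ _ (by omega)
      push_cast [h1]
      have he : ((q:ℚ)^n-1) * (((q:ℚ)^k-1)/((q:ℚ)^n-1)*(S.card:ℚ)) = (S.card:ℚ)*((q:ℚ)^k-1) := by
        have hne0 : ((q:ℚ)^n - 1) ≠ 0 := by linarith
        field_simp
      rw [he]
      )
  have hv0 : v ≠ 0 := by simpa [hU] using (Finset.mem_erase.mp hvU).1
  -- the point, its complement, and transfer to dimension n-1
  set P : Submodule F (Fin n → F) := F ∙ v with hP
  have hPrank : finrank F P = 1 := finrank_span_singleton hv0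
  obtain ⟨H, hH⟩ := Submodule.exists_isCompl P
  have hHrank : finrank F H = n - 1 := by
    have h2 := Submodule.finrank_add_eq_of_isCompl hH
    rw [hPrank, hV] at h2
    omega
  have hHn : finrank F H = finrank F (Fin (n-1) → F) := by
    simp [hHrank, Module.finrank_pi]
  obtain ⟨e⟩ := FiniteDimensional.nonempty_linearEquiv_of_finrank_eq hHn
  set T := S.filter (fun W => v ∈ W) with hT
  set f : Submodule F (Fin n → F) → Submodule F (Fin (n-1) → F) :=
    fun W => Submodule.map (e : H →ₗ[F] (Fin (n-1) → F)) (Submodule.comap H.subtype W) with hf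
  have hfrank : ∀ W ∈ T, finrank F (f W) = k - 1 := by
    intro W hWT
    obtain ⟨hWS, hvW⟩ := Finset.mem_filter.mp hWT
    have hPW : P ≤ W := by
      rw [hP, Submodule.span_singleton_le_iff_mem]
      exact hvW
    have hsupW : W ⊔ H = ⊤ := by
      rw [eq_top_iff, ← hH.codisjoint.eq_top]
      exact sup_le_sup_right hPW H
    have hinf : finrank F ↥(W ⊓ H) = k - 1 := by
      have h2 := Submodule.finrank_sup_add_finrank_inf_eq W H
      rw [hsupW, hSdim W hWS, hHrank, finrank_top, hV] at h2
      omega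
    have hcomap : Submodule.comap H.subtype W = Submodule.comap H.subtype (W ⊓ H) := by
      ext x
      simp [Submodule.mem_comap, x.2]
    rw [hf]
    simp only
    rw [LinearEquiv.finrank_map_eq, hcomap,
      (Submodule.comapSubtypeEquivOfLe inf_le_right).finrank_eq, hinf]
  have hfcov : ∀ R' : Submodule F (Fin (n-1) → F), finrank F R' = r - 1 →
      ∃ W ∈ T, R' ≤ f W := by
    intro R' hR'
    set R'' : Submodule F H := Submodule.comap (e : H →ₗ[F] (Fin (n-1) → F)) R' with hR''def
    have hR''rank : finrank F R'' = r - 1 := by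
      rw [hR''def, Submodule.comap_equiv_eq_map_symm, LinearEquiv.finrank_map_eq, hR']
    set R0 := Submodule.map H.subtype R'' with hR0def
    have hR0rank : finrank F R0 = r - 1 := by
      rw [hR0def, Submodule.finrank_map_subtype_eq, hR''rank]
    have hR0H : R0 ≤ H := Submodule.map_subtype_le _ _
    have hdisj : P ⊓ R0 = ⊥ := by
      rw [eq_bot_iff, ← hH.disjoint.eq_bot]
      exact inf_le_inf_left P hR0H
    have hRrank : finrank F ↥(P ⊔ R0) = r := by
      have h2 := Submodule.finrank_sup_add_finrank_inf_eq P R0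
      rw [hdisj, finrank_bot, hPrank, hR0rank] at h2
      omega
    obtain ⟨W, hWS, hRW⟩ := hScov (P ⊔ R0) hRrank
    have hvW : v ∈ W := hRW (le_sup_left (a := P) (b := R0)
      (Submodule.mem_span_singleton_self v))
    refine ⟨W, Finset.mem_filter.mpr ⟨hWS, hvW⟩, ?_⟩
    intro x hx
    have hy : e.symm x ∈ R'' := by
      rw [hR''def, Submodule.mem_comap]
      simpa using hx
    have hyW : (e.symm x : Fin n → F) ∈ W := by
      apply hRW
      apply le_sup_right (a := P) (b := R0)
      rw [hR0def]
      exact Submodule.mem_map_of_mem hy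
    exact ⟨e.symm x, hyW, by simp⟩
  have hcov' : covNum F (n-1) (k-1) (r-1) ≤ T.card := by
    refine le_trans ?_ (Finset.card_image_le (f := f))
    unfold covNum
    apply Nat.sInf_le
    refine ⟨T.image f, rfl, ?_, ?_⟩
    · intro W' hW'
      obtain ⟨W, hWT, rfl⟩ := Finset.mem_image.mp hW'
      exact hfrank W hWT
    · intro R' hR'
      obtain ⟨W, hWT, hle⟩ := hfcov R' hR'
      exact ⟨f W, Finset.mem_image_of_mem f hWT, hle⟩
  -- final arithmetic
  have hn0 : (0:ℚ) < (q:ℚ)^n - 1 := by linarith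
  have hk0 : (0:ℚ) < (q:ℚ)^k - 1 := by linarith
  have hC' : (covNum F (n-1) (k-1) (r-1) : ℚ) ≤ ((q:ℚ)^k - 1)/((q:ℚ)^n - 1) * S.card := by
    refine le_trans ?_ hvle
    exact_mod_cast le_trans hcov' (Nat.cast_le.mpr le_rfl)
  rw [div_mul_eq_mul_div, le_div_iff₀ hn0] at hC'
  rw [Int.ceil_le]
  push_cast
  rw [div_mul_eq_mul_div, div_le_iff₀ hk0, ← hScard]
  calc ((q:ℚ)^n - 1) * (covNum F (n-1) (k-1) (r-1) : ℚ)
      = (covNum F (n-1) (k-1) (r-1) : ℚ) * ((q:ℚ)^n - 1) := mul_comm _ _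
    _ ≤ ((q:ℚ)^k - 1) * S.card := hC'
    _ = (S.card : ℚ) * ((q:ℚ)^k - 1) := mul_comm _ _
end

section
/- If S is a q-covering design C_q[n,k,r], P is a 1-dimensional subspace of F_q^n, and Q is an (n−1)-dimensional subspace with F_q^n = P ⊕ Q, then S' = {Y ∩ Q : Y ∈ S, P ⊆ Y} is a q-covering design C_q[n−1, k−1, r−1] inside Q: every (r−1)-dimensional subspace of Q is contained in some element of S', and each element of S' has dimension k−1. -/
open Module

theorem derived_covering_design (F : Type) [Field F] [Fintype F] (n k r : ℕ)
    (hr1 : 1 ≤ r) (hrk : r ≤ k) (hkn : k ≤ n)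
    (S : Finset (Submodule F (Fin n → F)))
    (hdim : ∀ W ∈ S, finrank F W = k)
    (hcov : ∀ R : Submodule F (Fin n → F), finrank F R = r → ∃ W ∈ S, R ≤ W)
    (P Q : Submodule F (Fin n → F))
    (hP : finrank F P = 1) (hQ : finrank F Q = n - 1)
    (hcompl : IsCompl P Q) :
    (∀ Y ∈ S, P ≤ Y → finrank F ↥(Y ⊓ Q) = k - 1) ∧
    (∀ A : Submodule F (Fin n → F), A ≤ Q → finrank F A = r - 1 →
      ∃ Y ∈ S, P ≤ Y ∧ A ≤ Y ⊓ Q) := by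
  constructor
  · intro Y hY hPY
    have hsup : P ⊔ (Q ⊓ Y) = Y := by
      rw [← sup_inf_assoc_of_le Q hPY, hcompl.sup_eq_top, top_inf_eq]
    have hdisj : P ⊓ (Q ⊓ Y) = ⊥ := by
      rw [← inf_assoc, hcompl.inf_eq_bot, bot_inf_eq]
    have := Submodule.finrank_sup_add_finrank_inf_eq P (Q ⊓ Y)
    rw [hsup, hdisj, finrank_bot, hdim Y hY, hP] at this
    rw [inf_comm]
    omega
  · intro A hAQ hA
    have hdisj : P ⊓ A = ⊥ := by
      rw [← le_bot_iff, ← hcompl.inf_eq_bot]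
      exact inf_le_inf_left _ hAQ
    have hrk : finrank F ↥(P ⊔ A) = r := by
      have := Submodule.finrank_sup_add_finrank_inf_eq P A
      rw [hdisj, finrank_bot, hP, hA] at this
      omega
    obtain ⟨Y, hY, hle⟩ := hcov _ hrk
    exact ⟨Y, hY, le_trans le_sup_left hle,
      le_inf (le_trans le_sup_right hle) hAQ⟩
end
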